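/- Let F be a field of prime characteristic p, a ∈ F, and suppose X^p - X - a has no root in F. Let K = F[α] with α^p - α = a. Then the trace of α^(p-1) from K to F equals -1. -/

import Mathlib

open Polynomial

theorem trace_pow_pred_of_artin_schreier {F K : Type*} [Field F] [Field K] [Algebra F K]
    (p : ℕ) (hp : p.Prime) [CharP F p] (a : F)
    (hno : ∀ x : F, x ^ p - x ≠ a)
    (α : K) (hα : α ^ p - α = algebraMap F K a)
    (hadj : Algebra.adjoin F {α} = ⊤) :
    Algebra.trace F K (α ^ (p - 1)) = -1 := by
  classical
  have hp2 : 2 ≤ p := hp.two_le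
  have hinj : Function.Injective (algebraMap F K) := (algebraMap F K).injective
  haveI : CharP K p := charP_of_injective_algebraMap hinj p
  haveI : Fact p.Prime := ⟨hp⟩
  set c : K := algebraMap F K a with hc
  have hαp : α ^ p = α + c := by rw [← hα]; ring
  -- the Artin-Schreier polynomial
  set f : F[X] := X ^ p - (X + C a) with hfdef
  have hdegXC : (X + C a : F[X]).degree < (p : ℕ) := by
    rw [degree_X_add_C]
    exact_mod_cast (by omega : 1 < p)
  have hfm : f.Monic := monic_X_pow_sub hdegXC
  have hfα : (aeval α) f = 0 := by
    simp only [hfdef, map_sub, map_add, map_pow, aeval_X, aeval_C, ← hc]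
    rw [← hα]; ring
  have hint : IsIntegral F α := ⟨f, hfm, by rwa [← Polynomial.aeval_def]⟩
  set g : F[X] := minpoly F α with hgdef
  have hgm : g.Monic := minpoly.monic hint
  have hgdvd : g ∣ f := minpoly.dvd F α hfα
  -- map everything to K
  set fK : K[X] := X ^ p - (X + C c) with hfKdef
  have hmap : f.map (algebraMap F K) = fK := by
    simp [hfdef, hfKdef, Polynomial.map_sub, Polynomial.map_pow, Polynomial.map_add]
    exact hc.symm
  have hdegXCK : (X + C c : K[X]).degree < (p : ℕ) := by
    rw [degree_X_add_C]
    exact_mod_cast (by omega : 1 < p)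
  have hfKm : fK.Monic := monic_X_pow_sub hdegXCK
  have hfKne : fK ≠ 0 := hfKm.ne_zero
  have hfKdegle : fK.natDegree ≤ p := by
    refine (natDegree_sub_le _ _).trans ?_
    simp [natDegree_X_pow, natDegree_X_add_C]
    omega
  -- roots of fK
  have hTKroot : ∀ i : ℕ, (α + (i : K)) ∈ fK.roots := by
    intro i
    rw [mem_roots hfKne]
    have hip : (i : K) ^ p = (i : K) := by
      have h1 : ((i : ZMod p) : ZMod p) ^ p = ((i : ℕ) : ZMod p) := ZMod.pow_card _
      calc (i : K) ^ p = ((i ^ p : ℕ) : K) := by push_cast; ring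
        _ = (i : K) := by
            rw [CharP.natCast_eq_natCast K p]
            have := ZMod.pow_card (i : ZMod p)
            rwa [← Nat.cast_pow, ZMod.natCast_eq_natCast_iff] at this
    simp only [IsRoot, hfKdef, eval_sub, eval_add, eval_pow, eval_X, eval_C]
    rw [add_pow_char, hαp, hip]
    ring
  set TK : Multiset K := (Finset.range p).val.map (fun i : ℕ => α + (i : K)) with hTKdef
  have hTKnodup : TK.Nodup := by
    refine Multiset.Nodup.map_on ?_ (Finset.range p).nodup
    intro i hi j hj hij
    have : (i : K) = (j : K) := by
      have := hij; exact add_left_cancel this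
    exact CharP.natCast_injOn_Iio K p (by simpa using Finset.mem_range.1 hi)
      (by simpa using Finset.mem_range.1 hj) this
  have hTKle : TK ≤ fK.roots := by
    rw [Multiset.le_iff_subset hTKnodup]
    intro x hx
    obtain ⟨i, _, rfl⟩ := Multiset.mem_map.1 hx
    exact hTKroot i
  have hTKcard : Multiset.card TK = p := by simp [hTKdef]
  have hple : p ≤ Multiset.card fK.roots := by
    rw [← hTKcard]; exact Multiset.card_le_card hTKle
  have hfKdeg : fK.natDegree = p :=
    le_antisymm hfKdegle (le_trans hple (card_roots' fK))
  have hfKsplits : fK.Splits :=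
    splits_iff_card_roots.2 (le_antisymm (card_roots' fK) (hfKdeg ▸ hple))
  -- roots of X^p - X in K are exactly the casts of naturals below p
  set φ : K[X] := X ^ p - X with hφdef
  have hφm : φ.Monic := monic_X_pow_sub (by
    rw [degree_X]; exact_mod_cast (by omega : 1 < p))
  have hφne : φ ≠ 0 := hφm.ne_zero
  set T : Multiset K := (Finset.range p).val.map (fun i : ℕ => (i : K)) with hTdef
  have hTnodup : T.Nodup := by
    refine Multiset.Nodup.map_on ?_ (Finset.range p).nodup
    intro i hi j hj hij
    exact CharP.natCast_injOn_Iio K p (by simpa using Finset.mem_range.1 hi)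
      (by simpa using Finset.mem_range.1 hj) hij
  have hTle : T ≤ φ.roots := by
    rw [Multiset.le_iff_subset hTnodup]
    intro x hx
    obtain ⟨i, _, rfl⟩ := Multiset.mem_map.1 hx
    rw [mem_roots hφne]
    have hip : (i : K) ^ p = (i : K) := by
      calc (i : K) ^ p = ((i ^ p : ℕ) : K) := by push_cast; ring
        _ = (i : K) := by
            rw [CharP.natCast_eq_natCast K p]
            have := ZMod.pow_card (i : ZMod p)
            rwa [← Nat.cast_pow, ZMod.natCast_eq_natCast_iff] at this
    simp [IsRoot, hφdef, hip]
  have hφdegle : φ.natDegree ≤ p := by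
    refine (natDegree_sub_le _ _).trans ?_
    simp [natDegree_X_pow]
    omega
  have hTeq : T = φ.roots := by
    refine Multiset.eq_of_le_of_card_le hTle ?_
    calc Multiset.card φ.roots ≤ φ.natDegree := card_roots' φ
      _ ≤ p := hφdegle
      _ = Multiset.card T := by simp [hTdef]
  have keyRoot : ∀ t : K, t ^ p = t → ∃ s : F, algebraMap F K s = t := by
    intro t ht
    have htr : t ∈ φ.roots := by
      rw [mem_roots hφne]
      simp [IsRoot, hφdef, ht]
    rw [← hTeq] at htr
    obtain ⟨i, _, rfl⟩ := Multiset.mem_map.1 htr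
    exact ⟨(i : F), by simp⟩
  -- the minimal polynomial has degree p
  set G : K[X] := g.map (algebraMap F K) with hGdef
  have hGdvd : G ∣ fK := hmap ▸ Polynomial.map_dvd _ hgdvd
  have hGm : G.Monic := hgm.map _
  have hGsplits : G.Splits :=
    hfKsplits.of_dvd hfKne hGdvd
  have hGdeg : G.natDegree = g.natDegree := natDegree_map _
  have hdle : g.natDegree ≤ p := by
    have := natDegree_le_of_dvd hGdvd hfKne
    rwa [hGdeg, hfKdeg] at this
  have hd1 : 1 ≤ g.natDegree := minpoly.natDegree_pos hint
  have hGcard : Multiset.card G.roots = g.natDegree := by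
    rw [← hGdeg]; exact (splits_iff_card_roots.1 hGsplits)
  have hrootsub : ∀ r ∈ G.roots, (r - α) ^ p = r - α := by
    intro r hr
    have hr' : r ∈ fK.roots := Multiset.mem_of_le (roots.le_of_dvd hfKne hGdvd) hr
    have heval : eval r fK = 0 := (mem_roots hfKne).1 hr'
    have hrp : r ^ p = r + c := by
      simp only [hfKdef, eval_sub, eval_add, eval_pow, eval_X, eval_C] at heval
      linear_combination heval
    rw [sub_pow_char, hrp, hαp]
    ring
  set t : K := (G.roots.map (fun r => r - α)).sum with htdef
  have ht : t ^ p = t := by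
    rw [htdef, multiset_sum_pow_char, Multiset.map_map]
    congr 1
    exact Multiset.map_congr rfl (fun r hr => hrootsub r hr)
  obtain ⟨s, hs⟩ := keyRoot t ht
  have hsum : G.roots.sum = t + (g.natDegree : ℕ) • α := by
    have h1 : G.roots.sum = (G.roots.map (fun r => (r - α) + α)).sum := by
      simp
    rw [h1, Multiset.sum_map_add]
    congr 1
    rw [Multiset.map_const', Multiset.sum_replicate, hGcard]
  have hnext : G.nextCoeff = -G.roots.sum :=
    hGsplits.nextCoeff_eq_neg_sum_roots_of_monic hGm
  have hnextmap : G.nextCoeff = algebraMap F K g.nextCoeff := by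
    rw [hGdef, nextCoeff_map hinj]
  have hdp : g.natDegree = p := by
    rcases lt_or_eq_of_le hdle with hlt | h
    · exfalso
      have hdF : ((g.natDegree : ℕ) : F) ≠ 0 := by
        rw [Ne, CharP.cast_eq_zero_iff F p]
        intro hdvd
        have := Nat.le_of_dvd (by omega) hdvd
        omega
      -- d • α ∈ range of algebraMap
      have hdα : ((g.natDegree : ℕ) : K) * α = algebraMap F K (-g.nextCoeff - s) := by
        have h2 : (g.natDegree : ℕ) • α = G.roots.sum - t := by
          rw [hsum]; ring
        rw [← nsmul_eq_mul, h2, map_sub, map_neg, ← hnextmap, hnext, hs]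
        ring
      have hcast : ((g.natDegree : ℕ) : K) = algebraMap F K ((g.natDegree : ℕ) : F) := by
        simp
      set x : F := ((g.natDegree : ℕ) : F)⁻¹ * (-g.nextCoeff - s) with hxdef
      have hαx : α = algebraMap F K x := by
        have hne : ((g.natDegree : ℕ) : K) ≠ 0 := by
          rw [hcast]
          exact fun h => hdF (hinj (by simpa using h))
        apply mul_left_cancel₀ hne
        rw [hdα, hcast, ← map_mul]
        congr 1
        rw [hxdef]
        field_simp
      refine hno x ?_
      apply hinj
      rw [map_sub, map_pow, ← hαx, hα]
    · exact h
  -- build the power basis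
  set pb : PowerBasis F K := (Algebra.adjoin.powerBasis hint).map
    ((Subalgebra.equivOfEq _ ⊤ hadj).trans Subalgebra.topEquiv) with hpbdef
  have hgen : pb.gen = α := by
    rw [hpbdef, PowerBasis.map_gen, Algebra.adjoin.powerBasis_gen]
    rfl
  have hdim : pb.dim = p := by
    simp [hpbdef, Algebra.adjoin.powerBasis_dim, ← hgdef, hdp]
  set b : Module.Basis (Fin p) F K := pb.basis.reindex (finCongr hdim) with hbdef
  have hb : ∀ i : Fin p, b i = α ^ (i : ℕ) := by
    intro i
    rw [hbdef, Module.Basis.reindex_apply, pb.basis_eq_pow, hgen]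
    congr 1
  -- compute the trace via the multiplication matrix
  rw [Algebra.trace_eq_matrix_trace b]
  have key : ∀ i : Fin p, (Algebra.leftMulMatrix b (α ^ (p - 1))) i i
      = if (i : ℕ) = 0 then (0 : F) else 1 := by
    intro i
    rw [Algebra.leftMulMatrix_eq_repr_mul]
    obtain ⟨k, hk⟩ := i
    cases k with
    | zero =>
      have h0 : α ^ (p - 1) * b ⟨0, hk⟩ = b ⟨p - 1, by omega⟩ := by
        rw [hb, hb]
        simp
      rw [h0, b.repr_self, Finsupp.single_apply, if_neg, if_pos rfl]
      intro h
      have : p - 1 = 0 := by simpa using congrArg Fin.val h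
      omega
    | succ k =>
      have hkp : k < p := by omega
      have h1 : α ^ (p - 1) * b ⟨k + 1, hk⟩ = b ⟨k + 1, hk⟩ + a • b ⟨k, hkp⟩ := by
        simp only [hb]
        rw [Algebra.smul_def, ← hc]
        have hpow : α ^ (p - 1) * α ^ (k + 1) = α ^ k * α ^ p := by
          rw [← pow_add, ← pow_add]
          congr 1
          omega
        rw [hpow, hαp]
        ring
      rw [h1, map_add, map_smul, b.repr_self, b.repr_self, Finsupp.add_apply,
        Finsupp.smul_apply, Finsupp.single_apply, Finsupp.single_apply,
        if_pos rfl, if_neg, if_neg]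
      · simp
      · simp
      · intro h
        have : k = k + 1 := by simpa using congrArg Fin.val h
        omega
  rw [Matrix.trace]
  simp only [Matrix.diag]
  rw [Finset.sum_congr rfl (fun i _ => key i)]
  have : ∀ i : Fin p, (if (i : ℕ) = 0 then (0 : F) else 1)
      = 1 - (if i = (⟨0, by omega⟩ : Fin p) then (1 : F) else 0) := by
    intro i
    by_cases h : (i : ℕ) = 0
    · rw [if_pos h, if_pos (by ext; simpa using h)]; ring
    · rw [if_neg h, if_neg (fun hh => h (by simpa using congrArg Fin.val hh))]; ring
  rw [Finset.sum_congr rfl (fun i _ => this i)]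
  rw [Finset.sum_sub_distrib, Finset.sum_const, Finset.sum_ite_eq' Finset.univ _ (fun _ => (1 : F)),
    if_pos (Finset.mem_univ _)]
  simp [CharP.cast_eq_zero F p]
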